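/- Let A be an associative unital algebra over ℂ, and q a nonzero complex number with q ≠ ±1. If elements A₊, A₋, K, K⁻¹, P of A satisfy the osp_q(1|2) relations: K A₊ K⁻¹ = q^{1/2} A₊, K A₋ K⁻¹ = q^{-1/2} A₋, A₊A₋ + A₋A₊ = (K² - K⁻²)/(q^{1/2} - q^{-1/2}), P A₊ = -A₊ P, P A₋ = -A₋ P, P K = K P, K K⁻¹ = K⁻¹ K = 1, P² = 1, then the element Γ = (−A₊A₋ + (q^{-1/2} K² − q^{1/2} K⁻²)/(q − q^{-1})) P commutes with A₊. -/

import Mathlib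

/-- If elements `A₊, A₋, K, K⁻¹, P` of an associative unital ℂ-algebra satisfy the
`osp_q(1|2)` relations (with `s = q^{1/2}` a fixed square root of `q`), then the Casimir
element `Γ = (−A₊A₋ + (q^{-1/2}K² − q^{1/2}K⁻²)/(q − q⁻¹)) P` commutes with `A₊`. -/
theorem casimir_commutes_Aplus {A : Type*} [Ring A] [Algebra ℂ A]
    (q s : ℂ) (hq0 : q ≠ 0) (hq1 : q ≠ 1) (hqm1 : q ≠ -1) (hs : s ^ 2 = q)
    (Ap Am K K' P : A)
    (h1 : K * Ap * K' = s • Ap)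
    (h2 : K * Am * K' = s⁻¹ • Am)
    (h3 : Ap * Am + Am * Ap = (s - s⁻¹)⁻¹ • (K ^ 2 - K' ^ 2))
    (h4 : P * Ap = -(Ap * P)) (h5 : P * Am = -(Am * P)) (h6 : P * K = K * P)
    (h7 : K * K' = 1) (h8 : K' * K = 1) (h9 : P ^ 2 = 1) :
    ((-(Ap * Am) + (q - q⁻¹)⁻¹ • (s⁻¹ • K ^ 2 - s • K' ^ 2)) * P) * Ap
      = Ap * ((-(Ap * Am) + (q - q⁻¹)⁻¹ • (s⁻¹ • K ^ 2 - s • K' ^ 2)) * P) := by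
  have hs0 : s ≠ 0 := by
    intro h; apply hq0; rw [← hs, h]; ring
  have e1 : K * Ap = s • (Ap * K) := by
    have := congrArg (· * K) h1
    simpa [mul_assoc, h8, smul_mul_assoc] using this
  have e2 : Ap * K' = s • (K' * Ap) := by
    have := congrArg (K' * ·) h1
    simpa [← mul_assoc, h8, mul_smul_comm] using this
  have e2' : K' * Ap = s⁻¹ • (Ap * K') := by
    rw [e2, smul_smul, inv_mul_cancel₀ hs0, one_smul]
  have hK2 : K ^ 2 * Ap = q • (Ap * K ^ 2) := by
    have h' : K * (K * Ap) = s • (s • (Ap * K * K)) := by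
      rw [e1, mul_smul_comm, ← mul_assoc, e1, smul_mul_assoc]
    rw [sq, mul_assoc, h', smul_smul, mul_assoc, ← sq, hs]
  have hK'2 : K' ^ 2 * Ap = q⁻¹ • (Ap * K' ^ 2) := by
    have h' : K' * (K' * Ap) = s⁻¹ • (s⁻¹ • (Ap * K' * K')) := by
      rw [e2', mul_smul_comm, ← mul_assoc, e2', smul_mul_assoc]
    rw [sq, mul_assoc, h', smul_smul, ← mul_inv, mul_assoc, ← sq, hs]
  have hA : Ap * (Am * Ap) =
      (s - s⁻¹)⁻¹ • (Ap * K ^ 2) - (s - s⁻¹)⁻¹ • (Ap * K' ^ 2) - Ap * (Ap * Am) := by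
    have := congrArg (Ap * ·) h3
    simp only [mul_add, mul_smul_comm, mul_sub, smul_sub] at this
    rw [eq_sub_iff_add_eq, eq_sub_iff_add_eq]
    rw [add_comm _ (Ap * (Ap * Am)), this]; abel
  have hsm : s - s⁻¹ ≠ 0 := by
    intro h
    apply hq1
    have h' : s = s⁻¹ := sub_eq_zero.mp h
    rw [← hs, sq]; nth_rewrite 2 [h']; exact mul_inv_cancel₀ hs0
  have hqm : q - q⁻¹ ≠ 0 := by
    intro h
    have h' : q * q = 1 := by field_simp at h; linear_combination h
    have : (q - 1) * (q + 1) = 0 := by ring_nf; linear_combination h'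
    rcases mul_eq_zero.mp this with h'' | h''
    · exact hq1 (by linear_combination h'')
    · exact hqm1 (by linear_combination h'')
  -- the two scalar identities
  have hc1 : (q - q⁻¹)⁻¹ * (s⁻¹ * q + s⁻¹) = (s - s⁻¹)⁻¹ := by
    have i1 : (q - q⁻¹) * (q - q⁻¹)⁻¹ = 1 := mul_inv_cancel₀ hqm
    have i2 : (s - s⁻¹) * (s - s⁻¹)⁻¹ = 1 := mul_inv_cancel₀ hsm
    have key : (s⁻¹ * q + s⁻¹) * (s - s⁻¹) = q - q⁻¹ := by
      field_simp
      linear_combination (q + 1) * hs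
    calc (q - q⁻¹)⁻¹ * (s⁻¹ * q + s⁻¹)
        = (q - q⁻¹)⁻¹ * ((s⁻¹ * q + s⁻¹) * ((s - s⁻¹) * (s - s⁻¹)⁻¹)) := by
          rw [i2, mul_one]
      _ = (q - q⁻¹)⁻¹ * (q - q⁻¹) * (s - s⁻¹)⁻¹ := by
          rw [← mul_assoc (s⁻¹ * q + s⁻¹), key]; ring
      _ = (s - s⁻¹)⁻¹ := by rw [mul_comm ((q - q⁻¹)⁻¹), i1, one_mul]
  have hc2 : (q - q⁻¹)⁻¹ * (s * q⁻¹ + s) = (s - s⁻¹)⁻¹ := by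
    have i1 : (q - q⁻¹) * (q - q⁻¹)⁻¹ = 1 := mul_inv_cancel₀ hqm
    have i2 : (s - s⁻¹) * (s - s⁻¹)⁻¹ = 1 := mul_inv_cancel₀ hsm
    have key : (s * q⁻¹ + s) * (s - s⁻¹) = q - q⁻¹ := by
      field_simp
      linear_combination (q + 1) * hs
    calc (q - q⁻¹)⁻¹ * (s * q⁻¹ + s)
        = (q - q⁻¹)⁻¹ * ((s * q⁻¹ + s) * ((s - s⁻¹) * (s - s⁻¹)⁻¹)) := by
          rw [i2, mul_one]
      _ = (q - q⁻¹)⁻¹ * (q - q⁻¹) * (s - s⁻¹)⁻¹ := by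
          rw [← mul_assoc (s * q⁻¹ + s), key]; ring
      _ = (s - s⁻¹)⁻¹ := by rw [mul_comm ((q - q⁻¹)⁻¹), i1, one_mul]
  have key : (-(Ap * Am) + (q - q⁻¹)⁻¹ • (s⁻¹ • K ^ 2 - s • K' ^ 2)) * Ap
      = -(Ap * (-(Ap * Am) + (q - q⁻¹)⁻¹ • (s⁻¹ • K ^ 2 - s • K' ^ 2))) := by
    simp only [add_mul, mul_add, neg_mul, mul_neg, smul_mul_assoc, mul_smul_comm,
      sub_mul, mul_sub, smul_sub, mul_assoc, hK2, hK'2, hA]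
    match_scalars
    · linear_combination hc1
    · linear_combination -hc2
    · ring
  calc ((-(Ap * Am) + (q - q⁻¹)⁻¹ • (s⁻¹ • K ^ 2 - s • K' ^ 2)) * P) * Ap
      = (-(Ap * Am) + (q - q⁻¹)⁻¹ • (s⁻¹ • K ^ 2 - s • K' ^ 2)) * (P * Ap) := by
        rw [mul_assoc]
    _ = (-(Ap * Am) + (q - q⁻¹)⁻¹ • (s⁻¹ • K ^ 2 - s • K' ^ 2)) * (-(Ap * P)) := by
        rw [h4]
    _ = -((-(Ap * Am) + (q - q⁻¹)⁻¹ • (s⁻¹ • K ^ 2 - s • K' ^ 2)) * Ap) * P := by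
        rw [mul_neg, ← mul_assoc, neg_mul]
    _ = Ap * ((-(Ap * Am) + (q - q⁻¹)⁻¹ • (s⁻¹ • K ^ 2 - s • K' ^ 2)) * P) := by
        rw [key, neg_neg, ← mul_assoc]
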